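/- For 0 < n < 1 and R > 0, one has ∫_{nR}^{R} (√(R^2 - x^2) - x·arccos(x/R)) dx = ((1/4 + n^2/2)·arccos(n) - (3/4)·n·√(1-n^2))·R^2. -/

import Mathlib

theorem stmt_8 (n R : ℝ) (hn0 : 0 < n) (hn1 : n < 1) (hR : 0 < R) :
    ∫ x in (n * R)..R, (Real.sqrt (R ^ 2 - x ^ 2) - x * Real.arccos (x / R)) =
      ((1 / 4 + n ^ 2 / 2) * Real.arccos n - 3 / 4 * n * Real.sqrt (1 - n ^ 2)) * R ^ 2 := by
  have hRne : R ≠ 0 := hR.ne'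
  set F : ℝ → ℝ := fun x =>
    3 / 4 * x * Real.sqrt (R ^ 2 - x ^ 2) + R ^ 2 / 4 * Real.arcsin (x / R)
      - x ^ 2 / 2 * Real.arccos (x / R) with hF
  have hab : n * R ≤ R := by nlinarith
  have hcontF : ContinuousOn F (Set.Icc (n * R) R) := by
    apply Continuous.continuousOn
    apply Continuous.sub
    · exact ((continuous_const.mul continuous_id).mul
        ((continuous_const.sub (continuous_pow 2)).sqrt)).add
        (continuous_const.mul
          (Real.continuous_arcsin.comp (continuous_id.div_const R)))
    · exact ((continuous_pow 2).div_const 2).mul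
        (Real.continuous_arccos.comp (continuous_id.div_const R))
  have hint : IntervalIntegrable
      (fun x => Real.sqrt (R ^ 2 - x ^ 2) - x * Real.arccos (x / R)) MeasureTheory.volume (n * R) R := by
    apply Continuous.intervalIntegrable
    exact ((continuous_const.sub (continuous_pow 2)).sqrt).sub
      (continuous_id.mul (Real.continuous_arccos.comp (continuous_id.div_const R)))
  have key : ∀ x ∈ Set.Ioo (n * R) R,
      HasDerivAt F (Real.sqrt (R ^ 2 - x ^ 2) - x * Real.arccos (x / R)) x := by
    intro x hx
    have hx0 : 0 < x := lt_trans (by positivity) hx.1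
    have hxR : x < R := hx.2
    have hx2 : x ^ 2 < R ^ 2 := by nlinarith
    have hs2 : 0 < R ^ 2 - x ^ 2 := by linarith
    set s := Real.sqrt (R ^ 2 - x ^ 2) with hs
    have hspos : 0 < s := Real.sqrt_pos.mpr hs2
    have hsne : s ≠ 0 := hspos.ne'
    have hssq : s ^ 2 = R ^ 2 - x ^ 2 := Real.sq_sqrt hs2.le
    have hxRne1 : x / R ≠ 1 := by
      intro h; rw [div_eq_one_iff_eq hRne] at h; exact hxR.ne h
    have hxRnem1 : x / R ≠ -1 := by
      intro h
      have : x = -R := by field_simp at h; linarith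
      nlinarith
    have hsqrt1 : Real.sqrt (1 - (x / R) ^ 2) = s / R := by
      have : 1 - (x / R) ^ 2 = (R ^ 2 - x ^ 2) / R ^ 2 := by field_simp
      rw [this, Real.sqrt_div hs2.le, Real.sqrt_sq hR.le]
    have hg : HasDerivAt (fun y : ℝ => R ^ 2 - y ^ 2) (-(2 * x)) x := by
      simpa using (hasDerivAt_pow 2 x).const_sub (R ^ 2)
    have hsd : HasDerivAt (fun y => Real.sqrt (R ^ 2 - y ^ 2))
        (1 / (2 * s) * (-(2 * x))) x :=
      (Real.hasDerivAt_sqrt hs2.ne').comp x hg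
    have hdiv : HasDerivAt (fun y : ℝ => y / R) (1 / R) x := by
      simpa using (hasDerivAt_id x).div_const R
    have harcsin : HasDerivAt (fun y => Real.arcsin (y / R))
        (1 / Real.sqrt (1 - (x / R) ^ 2) * (1 / R)) x :=
      by have := (Real.hasDerivAt_arcsin hxRnem1 hxRne1).comp x hdiv; exact this
    have harccos : HasDerivAt (fun y => Real.arccos (y / R))
        (-(1 / Real.sqrt (1 - (x / R) ^ 2)) * (1 / R)) x :=
      by have := (Real.hasDerivAt_arccos hxRnem1 hxRne1).comp x hdiv; exact this
    have hx2d : HasDerivAt (fun y : ℝ => y ^ 2 / 2) x x := by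
      simpa using (hasDerivAt_pow 2 x).div_const 2
    have h34 : HasDerivAt (fun y : ℝ => 3 / 4 * y) (3 / 4) x := by
      simpa using (hasDerivAt_id x).const_mul (3 / 4 : ℝ)
    have hA : HasDerivAt (fun y => 3 / 4 * y * Real.sqrt (R ^ 2 - y ^ 2))
        (3 / 4 * s + 3 / 4 * x * (1 / (2 * s) * (-(2 * x)))) x := by
      have := h34.mul hsd; exact this
    have hB : HasDerivAt (fun y => R ^ 2 / 4 * Real.arcsin (y / R))
        (R ^ 2 / 4 * (1 / Real.sqrt (1 - (x / R) ^ 2) * (1 / R))) x :=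
      harcsin.const_mul _
    have hC : HasDerivAt (fun y => y ^ 2 / 2 * Real.arccos (y / R))
        (x * Real.arccos (x / R) + x ^ 2 / 2 * (-(1 / Real.sqrt (1 - (x / R) ^ 2)) * (1 / R))) x :=
      hx2d.mul harccos
    have := (hA.add hB).sub hC
    refine this.congr_deriv ?_; symm
    rw [hsqrt1]
    have hsr : 1 / (s / R) * (1 / R) = 1 / s := by
      field_simp
    have hsr2 : -(1 / (s / R)) * (1 / R) = -(1 / s) := by
      field_simp
    rw [hsr, hsr2]
    field_simp
    linear_combination 2 * hssq
  rw [intervalIntegral.integral_eq_sub_of_hasDeriv_right_of_le hab hcontF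
    (fun x hx => (key x hx).hasDerivWithinAt) hint]
  have h1 : R / R = 1 := div_self hRne
  have h2 : n * R / R = n := by field_simp
  have h3 : Real.sqrt (R ^ 2 - R ^ 2) = 0 := by simp
  have h4 : Real.sqrt (R ^ 2 - (n * R) ^ 2) = Real.sqrt (1 - n ^ 2) * R := by
    rw [show R ^ 2 - (n * R) ^ 2 = (1 - n ^ 2) * R ^ 2 by ring,
      Real.sqrt_mul (by nlinarith), Real.sqrt_sq hR.le]
  simp only [hF, h1, h2, h3, h4, Real.arcsin_one, Real.arccos_one, Real.arccos]
  ring
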